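/- Let φ: ℝⁿ → ℝ≥0 be a semi-norm and for positive integer t define OPT(t,1) = max{φ(x) : ‖x‖₂ ≤ 1, ‖x‖₀ ≤ t}. Then for every t ≥ k ≥ 1, OPT(t,1) ≤ √⌈t/k⌉ · OPT(k,1). -/

import Mathlib

lemma spca_key (n k : ℕ) (φ : EuclideanSpace ℝ (Fin n) → ℝ)
    (hsub : ∀ u v, φ (u + v) ≤ φ u + φ v)
    (C : ℝ) (hC : 0 ≤ C) (hk : 1 ≤ k)
    (hbase : ∀ x : EuclideanSpace ℝ (Fin n),
      (Finset.univ.filter (fun i => x i ≠ 0)).card ≤ k → φ x ≤ ‖x‖ * C) :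
    ∀ t : ℕ, 1 ≤ t → ∀ x : EuclideanSpace ℝ (Fin n),
      (Finset.univ.filter (fun i => x i ≠ 0)).card ≤ t →
      φ x ≤ Real.sqrt ((⌈(t : ℝ) / (k : ℝ)⌉ : ℤ) : ℝ) * ‖x‖ * C := by
  intro t
  induction t using Nat.strong_induction_on with
  | _ t IH =>
    intro ht x hx
    have hk0 : (0:ℝ) < k := by exact_mod_cast hk
    have hm1 : (1:ℤ) ≤ ⌈(t : ℝ) / (k : ℝ)⌉ := by
      rw [Int.le_ceil_iff]
      push_cast
      rw [lt_div_iff₀ hk0]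
      have h1 : (1:ℝ) ≤ t := by exact_mod_cast ht
      nlinarith
    have hm1' : (1:ℝ) ≤ ((⌈(t : ℝ) / (k : ℝ)⌉ : ℤ) : ℝ) := by exact_mod_cast hm1
    by_cases hcard : (Finset.univ.filter (fun i => x i ≠ 0)).card ≤ k
    · calc φ x ≤ ‖x‖ * C := hbase x hcard
        _ = 1 * ‖x‖ * C := by ring
        _ ≤ Real.sqrt ((⌈(t : ℝ) / (k : ℝ)⌉ : ℤ) : ℝ) * ‖x‖ * C := by
          have : (1:ℝ) ≤ Real.sqrt ((⌈(t : ℝ) / (k : ℝ)⌉ : ℤ) : ℝ) := by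
            rw [show (1:ℝ) = Real.sqrt 1 from (Real.sqrt_one).symm]
            exact Real.sqrt_le_sqrt hm1'
          gcongr
    · push_neg at hcard
      set S := Finset.univ.filter (fun i => x i ≠ 0) with hS
      obtain ⟨T, hTS, hTcard⟩ := Finset.exists_subset_card_eq (le_of_lt hcard)
      set x₁ : EuclideanSpace ℝ (Fin n) := WithLp.toLp 2 (fun i => if i ∈ T then x i else 0) with hx1
      set x₂ : EuclideanSpace ℝ (Fin n) := WithLp.toLp 2 (fun i => if i ∈ T then 0 else x i) with hx2
      have hsum : x = x₁ + x₂ := by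
        ext i
        simp only [hx1, hx2, PiLp.add_apply]
        by_cases h : i ∈ T <;> simp [h]
      -- cardinalities
      have hc1 : (Finset.univ.filter (fun i => x₁ i ≠ 0)).card ≤ k := by
        rw [← hTcard]
        apply Finset.card_le_card
        intro i hi
        simp only [Finset.mem_filter, hx1] at hi
        by_contra h
        exact hi.2 (by simp [h])
      have hc2 : (Finset.univ.filter (fun i => x₂ i ≠ 0)).card ≤ t - k := by
        have hsub2 : (Finset.univ.filter (fun i => x₂ i ≠ 0)) ⊆ S \ T := by
          intro i hi
          simp only [Finset.mem_filter, hx2] at hi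
          by_cases h : i ∈ T
          · simp [h] at hi
          · simp only [Finset.mem_sdiff, hS, Finset.mem_filter, Finset.mem_univ, true_and]
            exact ⟨by simpa [h] using hi.2, h⟩
        calc (Finset.univ.filter (fun i => x₂ i ≠ 0)).card ≤ (S \ T).card :=
              Finset.card_le_card hsub2
          _ = S.card - T.card := Finset.card_sdiff_of_subset hTS
          _ ≤ t - k := by omega
      have hklt : k < t := lt_of_lt_of_le hcard hx
      have ht2 : 1 ≤ t - k := by omega
      have hIH := IH (t - k) (by omega) ht2 x₂ hc2
      -- ceiling arithmetic
      have hceil : ((⌈((t - k : ℕ) : ℝ) / (k : ℝ)⌉ : ℤ) : ℝ)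
          = ((⌈(t : ℝ) / (k : ℝ)⌉ : ℤ) : ℝ) - 1 := by
        have hcast : ((t - k : ℕ) : ℝ) = (t : ℝ) - (k : ℝ) := by
          push_cast [Nat.cast_sub (le_of_lt hklt)]; ring
        rw [hcast, show ((t:ℝ) - k) / k = (t:ℝ)/k - ((1:ℤ):ℝ) by
          push_cast; field_simp, Int.ceil_sub_intCast]
        push_cast; ring
      -- norms
      set m : ℝ := ((⌈(t : ℝ) / (k : ℝ)⌉ : ℤ) : ℝ) with hm
      have hnorm : ‖x₁‖^2 + ‖x₂‖^2 = ‖x‖^2 := by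
        have e : ∀ y : EuclideanSpace ℝ (Fin n), ‖y‖^2 = ∑ i, (y i)^2 := by
          intro y
          rw [EuclideanSpace.norm_eq, Real.sq_sqrt (Finset.sum_nonneg fun i _ => sq_nonneg _)]
          simp [Real.norm_eq_abs, sq_abs]
        rw [e, e, e, ← Finset.sum_add_distrib]
        apply Finset.sum_congr rfl
        intro i _
        simp only [hx1, hx2]
        by_cases h : i ∈ T <;> simp [h]
      have hsq : Real.sqrt (m - 1) * Real.sqrt (m - 1) = m - 1 :=
        Real.mul_self_sqrt (by linarith)
      have hmain : ‖x₁‖ + Real.sqrt (m - 1) * ‖x₂‖ ≤ Real.sqrt m * ‖x‖ := by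
        have h1 : (‖x₁‖ + Real.sqrt (m - 1) * ‖x₂‖)^2 ≤ m * ‖x‖^2 := by
          rw [← hnorm]
          nlinarith [sq_nonneg (Real.sqrt (m-1) * ‖x₁‖ - ‖x₂‖), norm_nonneg x₁,
            norm_nonneg x₂, Real.sqrt_nonneg (m-1)]
        have h2 : 0 ≤ ‖x₁‖ + Real.sqrt (m - 1) * ‖x₂‖ :=
          add_nonneg (norm_nonneg x₁) (mul_nonneg (Real.sqrt_nonneg _) (norm_nonneg x₂))
        calc ‖x₁‖ + Real.sqrt (m - 1) * ‖x₂‖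
            = Real.sqrt ((‖x₁‖ + Real.sqrt (m - 1) * ‖x₂‖)^2) := (Real.sqrt_sq h2).symm
          _ ≤ Real.sqrt (m * ‖x‖^2) := Real.sqrt_le_sqrt h1
          _ = Real.sqrt m * ‖x‖ := by
              rw [Real.sqrt_mul (by linarith), Real.sqrt_sq (norm_nonneg x)]
      calc φ x = φ (x₁ + x₂) := by rw [← hsum]
        _ ≤ φ x₁ + φ x₂ := hsub x₁ x₂
        _ ≤ ‖x₁‖ * C + Real.sqrt (m - 1) * ‖x₂‖ * C := by
            have := hbase x₁ hc1
            rw [hceil] at hIH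
            linarith
        _ = (‖x₁‖ + Real.sqrt (m - 1) * ‖x₂‖) * C := by ring
        _ ≤ Real.sqrt m * ‖x‖ * C := by gcongr

/-- The optimal value of the semi-norm SPCA problem with right-hand sides `t` (sparsity)
and `w` (Euclidean norm bound). -/
noncomputable def OPT (n : ℕ) (φ : EuclideanSpace ℝ (Fin n) → ℝ) (t : ℕ) (w : ℝ) : ℝ :=
  sSup (φ '' {x | ‖x‖ ≤ w ∧ (Finset.univ.filter (fun i => x i ≠ 0)).card ≤ t})

theorem stmt_8 (n : ℕ) (φ : EuclideanSpace ℝ (Fin n) → ℝ)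
    (hhom : ∀ l : ℝ, 0 ≤ l → ∀ x, φ (l • x) = l * φ x)
    (hsub : ∀ u v, φ (u + v) ≤ φ u + φ v)
    (hnonneg : ∀ x, 0 ≤ φ x)
    (hzero : φ 0 = 0)
    (k t : ℕ) (hk : 1 ≤ k) (hkt : k ≤ t) :
    OPT n φ t 1 ≤ Real.sqrt ((⌈(t : ℝ) / (k : ℝ)⌉ : ℤ) : ℝ) * OPT n φ k 1 := by
  have h0memk : φ 0 ∈ φ '' {x : EuclideanSpace ℝ (Fin n) |
      ‖x‖ ≤ 1 ∧ (Finset.univ.filter (fun i => x i ≠ 0)).card ≤ k} := by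
    refine ⟨0, ⟨by simp, ?_⟩, rfl⟩
    have : (Finset.univ.filter (fun i => (0 : EuclideanSpace ℝ (Fin n)) i ≠ 0)) = ∅ := by
      ext i; simp
    simp [this]
  have hCnonneg : 0 ≤ OPT n φ k 1 := by
    by_cases hbk : BddAbove (φ '' {x : EuclideanSpace ℝ (Fin n) |
        ‖x‖ ≤ 1 ∧ (Finset.univ.filter (fun i => x i ≠ 0)).card ≤ k})
    · have := le_csSup hbk h0memk
      rwa [hzero] at this
    · unfold OPT
      rw [Real.sSup_of_not_bddAbove hbk]
  by_cases hbdd : BddAbove (φ '' {x : EuclideanSpace ℝ (Fin n) |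
      ‖x‖ ≤ 1 ∧ (Finset.univ.filter (fun i => x i ≠ 0)).card ≤ t})
  · have hbddk : BddAbove (φ '' {x : EuclideanSpace ℝ (Fin n) |
        ‖x‖ ≤ 1 ∧ (Finset.univ.filter (fun i => x i ≠ 0)).card ≤ k}) := by
      refine hbdd.mono (Set.image_mono ?_)
      intro x hx
      exact ⟨hx.1, le_trans hx.2 hkt⟩
    have hbase : ∀ x : EuclideanSpace ℝ (Fin n),
        (Finset.univ.filter (fun i => x i ≠ 0)).card ≤ k → φ x ≤ ‖x‖ * OPT n φ k 1 := by
      intro x hxc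
      by_cases hx0 : x = 0
      · simp [hx0, hzero]
      · have hn : (0:ℝ) < ‖x‖ := norm_pos_iff.mpr hx0
        have hxeq : x = ‖x‖ • (‖x‖⁻¹ • x) := (smul_inv_smul₀ (ne_of_gt hn) x).symm
        have hmem : φ (‖x‖⁻¹ • x) ∈ φ '' {y : EuclideanSpace ℝ (Fin n) |
            ‖y‖ ≤ 1 ∧ (Finset.univ.filter (fun i => y i ≠ 0)).card ≤ k} := by
          refine ⟨‖x‖⁻¹ • x, ⟨?_, ?_⟩, rfl⟩
          · rw [norm_smul, norm_inv, norm_norm, inv_mul_cancel₀ (ne_of_gt hn)]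
          · refine le_trans (le_of_eq (congrArg Finset.card ?_)) hxc
            apply Finset.filter_congr
            intro i _
            simp only [PiLp.smul_apply, smul_eq_mul, ne_eq, mul_eq_zero, not_or,
              inv_eq_zero, eq_iff_iff]
            constructor
            · exact fun h => h.2
            · exact fun h => ⟨ne_of_gt hn, h⟩
        have hle : φ (‖x‖⁻¹ • x) ≤ OPT n φ k 1 := le_csSup hbddk hmem
        calc φ x = ‖x‖ * φ (‖x‖⁻¹ • x) := by rw [hxeq, hhom ‖x‖ (norm_nonneg x)]; rw [← hxeq]
          _ ≤ ‖x‖ * OPT n φ k 1 := by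
            exact mul_le_mul_of_nonneg_left hle (norm_nonneg x)
    unfold OPT
    apply Real.sSup_le
    · rintro y ⟨x, ⟨hx1, hx2⟩, rfl⟩
      calc φ x ≤ Real.sqrt ((⌈(t : ℝ) / (k : ℝ)⌉ : ℤ) : ℝ) * ‖x‖ * OPT n φ k 1 :=
            spca_key n k φ hsub (OPT n φ k 1) hCnonneg hk hbase t (le_trans hk hkt) x hx2
        _ ≤ Real.sqrt ((⌈(t : ℝ) / (k : ℝ)⌉ : ℤ) : ℝ) * 1 * OPT n φ k 1 := by
            exact mul_le_mul_of_nonneg_right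
              (mul_le_mul_of_nonneg_left hx1 (Real.sqrt_nonneg _)) hCnonneg
        _ = Real.sqrt ((⌈(t : ℝ) / (k : ℝ)⌉ : ℤ) : ℝ) * OPT n φ k 1 := by ring
    · exact mul_nonneg (Real.sqrt_nonneg _) hCnonneg
  · unfold OPT
    rw [Real.sSup_of_not_bddAbove hbdd]
    exact mul_nonneg (Real.sqrt_nonneg _) hCnonneg
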